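/- Let R be a commutative ring, I ⊆ R an ideal, v ∈ R, and N a finitely generated R-module such that for every y ∈ N there exists r ≥ 0 with v^r · y ∈ I·N. Then there exist r ≥ 1 and u ∈ I such that (v^r + u) · y = 0 for all y ∈ N, i.e., the annihilator of N contains an element of the form v^r + u with u ∈ I. -/

import Mathlib

/-- Let `R` be a commutative ring, `I ⊆ R` an ideal, `v ∈ R`, and `N` a finitely generated
`R`-module such that every `y ∈ N` is sent into `I·N` by some power of `v`. Then the
annihilator of `N` contains an element of the form `v^r + u` with `r ≥ 1` and `u ∈ I`. -/
theorem annihilator_contains_vpow_add_of_pow_smul_mem (R : Type) [CommRing R]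
    (I : Ideal R) (v : R) (N : Type) [AddCommGroup N] [Module R N] [Module.Finite R N]
    (h : ∀ y : N, ∃ r : ℕ, v ^ r • y ∈ I • (⊤ : Submodule R N)) :
    ∃ r : ℕ, 1 ≤ r ∧ ∃ u ∈ I, ∀ y : N, (v ^ r + u) • y = 0 := by
  classical
  obtain ⟨S, hS⟩ := Module.Finite.fg_top (R := R) (M := N)
  set s : ℕ := (S.sup fun y => (h y).choose) + 1 with hs_def
  -- v ^ s sends everything into I • ⊤
  have hall : ∀ y : N, v ^ s • y ∈ I • (⊤ : Submodule R N) := by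
    intro y
    have hy : y ∈ Submodule.span R (S : Set N) := by rw [hS]; exact Submodule.mem_top
    have : Submodule.span R (S : Set N) ≤
        Submodule.comap ((v ^ s) • (LinearMap.id : N →ₗ[R] N)) (I • (⊤ : Submodule R N)) := by
      apply Submodule.span_le.mpr
      intro x hx
      simp only [SetLike.mem_coe, Submodule.mem_comap, LinearMap.smul_apply, LinearMap.id_apply]
      have hr : (h x).choose ≤ s :=
        le_trans (Finset.le_sup (f := fun y => (h y).choose) hx) (Nat.le_succ _)
      have : v ^ s • x = v ^ (s - (h x).choose) • (v ^ (h x).choose • x) := by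
        rw [smul_smul, ← pow_add]
        rw [Nat.sub_add_cancel hr]
      rw [this]
      exact Submodule.smul_mem _ _ (h x).choose_spec
    have := this hy
    simpa using this
  -- Cayley–Hamilton on f = v^s • id
  set f : Module.End R N := (v ^ s) • 1 with hf_def
  have hrange : LinearMap.range f ≤ I • (⊤ : Submodule R N) := by
    rintro _ ⟨y, rfl⟩
    simpa [hf_def] using hall y
  obtain ⟨p, hmonic, -, hcoeff, haeval⟩ :=
    LinearMap.exists_monic_and_coeff_mem_pow_and_aeval_eq_zero_of_range_le_smul R f I hrange
  set n := p.natDegree with hn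
  by_cases hn0 : n = 0
  · -- degree 0: p = 1, so N = 0
    have hp1 : p = 1 := Polynomial.Monic.natDegree_eq_zero hmonic |>.mp hn0
    have : (1 : Module.End R N) = 0 := by simpa [hp1] using haeval
    refine ⟨1, le_refl 1, 0, I.zero_mem, fun y => ?_⟩
    have hy0 : y = 0 := by
      calc y = (1 : Module.End R N) y := rfl
        _ = (0 : Module.End R N) y := by rw [this]
        _ = 0 := rfl
    simp [hy0]
  · refine ⟨s * n, ?_, ∑ i ∈ Finset.range n, p.coeff i * (v ^ s) ^ i, ?_, ?_⟩
    · have : 1 ≤ s := by omega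
      have : 1 ≤ n := Nat.one_le_iff_ne_zero.mpr hn0
      exact Nat.one_le_iff_ne_zero.mpr (by positivity)
    · apply Ideal.sum_mem
      intro i hi
      have hi' : i < n := Finset.mem_range.mp hi
      have : p.coeff i ∈ I ^ (n - i) := hcoeff i
      have hIn : I ^ (n - i) ≤ I := Ideal.pow_le_self (by omega)
      exact I.mul_mem_right _ (hIn this)
    · intro y
      have key : (Polynomial.aeval f p) y = 0 := by rw [haeval]; rfl
      rw [Polynomial.aeval_eq_sum_range] at key
      simp only [LinearMap.sum_apply, LinearMap.smul_apply] at key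
      have hfy : ∀ i : ℕ, (f ^ i) y = (v ^ s) ^ i • y := by
        intro i
        rw [hf_def, smul_pow, one_pow]
        rfl
      simp only [hfy, smul_smul] at key
      rw [← Finset.sum_smul, ← hn, Finset.sum_range_succ, hmonic.coeff_natDegree, one_mul,
        ← pow_mul] at key
      rw [add_comm (v ^ (s * n))]
      exact key
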